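/- Suppose all bounds L^s, U^s, L^x, U^x, L^y, U^y are nonnegative, and let q = (x, y, w, z, s) ∈ Q be a feasible point. Suppose there exist a vendor v₁ ∈ 𝒱 and a time period t₁ ∈ 𝒯 such that: (i) L^x_{v₁,t₁} < x_{v₁,t₁} < U^x_{v₁,t₁}; (ii) L^s_t < s_t < U^s_t for every t ∈ 𝒯 with t ≥ t₁; and (iii) Σ_{v∈𝒱} y_{v,t+1} < s_t for every t with t₁ ≤ t < T. Then q is not an extreme point of P = conv(Q). -/

import Mathlib

open scoped BigOperators

/-- A point of the warehouse problem: purchases `x`, sales `y`,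
purchase indicators `w`, sale indicators `z` (all indexed by vendor and time),
and stock levels `s` (indexed by time). -/
abbrev WPoint (V T : ℕ) :=
  (Fin V → Fin T → ℝ) × (Fin V → Fin T → ℝ) × (Fin V → Fin T → ℝ) ×
    (Fin V → Fin T → ℝ) × (Fin T → ℝ)

namespace WPoint

variable {V T : ℕ}

def x (p : WPoint V T) : Fin V → Fin T → ℝ := p.1
def y (p : WPoint V T) : Fin V → Fin T → ℝ := p.2.1
def w (p : WPoint V T) : Fin V → Fin T → ℝ := p.2.2.1
def z (p : WPoint V T) : Fin V → Fin T → ℝ := p.2.2.2.1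
def s (p : WPoint V T) : Fin T → ℝ := p.2.2.2.2

end WPoint

/-- A selector of one of the `x`/`y` decision variables. -/
structure WVar (V T : ℕ) where
  isX : Bool
  v : Fin V
  t : Fin T

/-- The value of the selected variable. -/
def WVar.val {V T : ℕ} (x y : Fin V → Fin T → ℝ) (u : WVar V T) : ℝ :=
  if u.isX then x u.v u.t else y u.v u.t

/-- The lower bound of the selected variable. -/
def WVar.lb {V T : ℕ} (Lx Ly : Fin V → Fin T → ℝ) (u : WVar V T) : ℝ :=
  if u.isX then Lx u.v u.t else Ly u.v u.t

/-- The upper bound of the selected variable. -/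
def WVar.ub {V T : ℕ} (Ux Uy : Fin V → Fin T → ℝ) (u : WVar V T) : ℝ :=
  if u.isX then Ux u.v u.t else Uy u.v u.t

/-- A generalized complementarity constraint `(V₁ - B₁)(V₂ - B₂) = 0`. -/
structure CompCon (V T : ℕ) where
  V1 : WVar V T
  V2 : WVar V T
  B1 : ℝ
  B2 : ℝ

/-- Validity of a complementarity tuple: the time index of `V₁` is at most that of `V₂`,
and each constant is zero or the lower or upper bound of the corresponding variable. -/
def ValidCompCon {V T : ℕ} (Lx Ux Ly Uy : Fin V → Fin T → ℝ) (c : CompCon V T) : Prop :=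
  c.V1.t ≤ c.V2.t ∧
  (c.B1 = 0 ∨ c.B1 = c.V1.lb Lx Ly ∨ c.B1 = c.V1.ub Ux Uy) ∧
  (c.B2 = 0 ∨ c.B2 = c.V2.lb Lx Ly ∨ c.B2 = c.V2.ub Ux Uy)

/-- The stock level at the end of period `t - 1` (the initial stock `s0` when `t = 1`). -/
def prevStock {T : ℕ} (s0 : ℝ) (s : Fin T → ℝ) (t : Fin T) : ℝ :=
  if _ : (t : ℕ) = 0 then s0 else s ⟨(t : ℕ) - 1, lt_of_le_of_lt (Nat.sub_le _ _) t.isLt⟩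

/-- The feasible region `Q` of the warehouse problem. -/
def Qset {V T : ℕ} (s0 : ℝ) (Ls Us : Fin T → ℝ) (Lx Ux Ly Uy : Fin V → Fin T → ℝ)
    (C : Finset (CompCon V T)) : Set (WPoint V T) :=
  { p | (∀ t, p.s t = prevStock s0 p.s t - ∑ v, p.y v t + ∑ v, p.x v t) ∧
        (∀ t, Ls t ≤ p.s t ∧ p.s t ≤ Us t) ∧
        (∀ t, ∑ v, p.y v t ≤ prevStock s0 p.s t) ∧
        (∀ c ∈ C, (c.V1.val p.x p.y - c.B1) * (c.V2.val p.x p.y - c.B2) = 0) ∧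
        (∀ v t, Ly v t * p.z v t ≤ p.y v t ∧ p.y v t ≤ Uy v t * p.z v t) ∧
        (∀ v t, Lx v t * p.w v t ≤ p.x v t ∧ p.x v t ≤ Ux v t * p.w v t) ∧
        (∀ v t, p.w v t = 0 ∨ p.w v t = 1) ∧
        (∀ v t, p.z v t = 0 ∨ p.z v t = 1) }

/-- The set `S` of candidate extreme stock levels. -/
def Sset {V T : ℕ} (s0 : ℝ) (Ls Us : Fin T → ℝ) (Lx Ux Ly Uy : Fin V → Fin T → ℝ) :
    Set ℝ :=
  { r | ∃ (K : ℝ) (lam : Fin 4 → Fin V → Fin T → ℝ),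
      (K = 0 ∨ K = s0 ∨ (∃ t, K = Ls t) ∨ (∃ t, K = Us t)) ∧
      (∀ j v t, lam j v t = -1 ∨ lam j v t = 0 ∨ lam j v t = 1) ∧
      r = K - ∑ t, ∑ v,
        (lam 0 v t * Ly v t + lam 1 v t * Uy v t + lam 2 v t * Lx v t + lam 3 v t * Ux v t) }

/-- A feasible point with a purchase quantity `x_{v₁,t₁}` strictly between
its bounds, all later stock levels strictly between their bounds, and all later total sales
strictly below the preceding stock level, is not an extreme point of `P = conv(Q)`. -/
theorem not_extremePoint_of_strict {V T : ℕ} (s0 : ℝ)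
    (Ls Us : Fin T → ℝ) (Lx Ux Ly Uy : Fin V → Fin T → ℝ)
    (C : Finset (CompCon V T))
    (hLs : ∀ t, 0 ≤ Ls t) (hsLU : ∀ t, Ls t ≤ Us t)
    (hLx : ∀ v t, 0 ≤ Lx v t) (hxLU : ∀ v t, Lx v t ≤ Ux v t)
    (hLy : ∀ v t, 0 ≤ Ly v t) (hyLU : ∀ v t, Ly v t ≤ Uy v t)
    (hC : ∀ c ∈ C, ValidCompCon Lx Ux Ly Uy c)
    (q : WPoint V T) (hq : q ∈ Qset s0 Ls Us Lx Ux Ly Uy C)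
    (v₁ : Fin V) (t₁ : Fin T)
    (hx1 : Lx v₁ t₁ < WPoint.x q v₁ t₁ ∧ WPoint.x q v₁ t₁ < Ux v₁ t₁)
    (hstrict : ∀ t : Fin T, t₁ ≤ t → Ls t < WPoint.s q t ∧ WPoint.s q t < Us t)
    (hsales : ∀ t : Fin T, t₁ ≤ t → ∀ h : (t : ℕ) + 1 < T,
      ∑ v, WPoint.y q v ⟨(t : ℕ) + 1, h⟩ < WPoint.s q t) :
    q ∉ Set.extremePoints ℝ (convexHull ℝ (Qset s0 Ls Us Lx Ux Ly Uy C)) := by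
  classical
  simp only [Qset, Set.mem_setOf_eq] at hq
  obtain ⟨hbal, hsb, hsale, hcompl, hyb, hxb, hw01, hz01⟩ := hq
  simp only [WPoint.x, WPoint.y, WPoint.w, WPoint.z, WPoint.s] at hx1 hstrict hsales hbal hsb hsale hcompl hyb hxb hw01 hz01
  set dx : Fin V → Fin T → ℝ := fun v t => if v = v₁ ∧ t = t₁ then 1 else 0 with hdxdef
  set ds : Fin T → ℝ := fun t => if t₁ ≤ t then 1 else 0 with hdsdef
  set f : Fin T → ℝ := fun t =>
    if t₁ ≤ t then
      min (min (q.2.2.2.2 t - Ls t) (Us t - q.2.2.2.2 t))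
        (if h2 : (t : ℕ) + 1 < T then
            q.2.2.2.2 t - ∑ v, q.2.1 v ⟨(t : ℕ) + 1, h2⟩ else 1)
    else 1 with hfdef
  have hfpos : ∀ t, 0 < f t := by
    intro t
    by_cases ht : t₁ ≤ t
    · have h1 := hstrict t ht
      simp only [hfdef, if_pos ht]
      refine lt_min (lt_min (by linarith [h1.1]) (by linarith [h1.2])) ?_
      split
      · next h2 => have := hsales t ht h2; linarith
      · norm_num
    · simp [hfdef, ht]
  have hTne : (Finset.univ : Finset (Fin T)).Nonempty := ⟨t₁, Finset.mem_univ _⟩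
  set ε : ℝ := min (min (q.1 v₁ t₁ - Lx v₁ t₁) (Ux v₁ t₁ - q.1 v₁ t₁))
      (Finset.univ.inf' hTne f) with hεdef
  have hεpos : 0 < ε := by
    refine lt_min (lt_min (by linarith [hx1.1]) (by linarith [hx1.2])) ?_
    exact (Finset.lt_inf'_iff hTne).mpr fun t _ => hfpos t
  have hεf : ∀ t, ε ≤ f t := fun t =>
    le_trans (min_le_right _ _) (Finset.inf'_le f (Finset.mem_univ t))
  have hεxL : ε ≤ q.1 v₁ t₁ - Lx v₁ t₁ :=
    le_trans (min_le_left _ _) (min_le_left _ _)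
  have hεxU : ε ≤ Ux v₁ t₁ - q.1 v₁ t₁ :=
    le_trans (min_le_left _ _) (min_le_right _ _)
  have hεLs : ∀ t, t₁ ≤ t → ε ≤ q.2.2.2.2 t - Ls t := by
    intro t ht
    have h := hεf t
    simp only [hfdef, if_pos ht] at h
    exact le_trans h (le_trans (min_le_left _ _) (min_le_left _ _))
  have hεUs : ∀ t, t₁ ≤ t → ε ≤ Us t - q.2.2.2.2 t := by
    intro t ht
    have h := hεf t
    simp only [hfdef, if_pos ht] at h
    exact le_trans h (le_trans (min_le_left _ _) (min_le_right _ _))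
  have hεSale : ∀ t (ht : t₁ ≤ t) (h2 : (t : ℕ) + 1 < T),
      ε ≤ q.2.2.2.2 t - ∑ v, q.2.1 v ⟨(t : ℕ) + 1, h2⟩ := by
    intro t ht h2
    have h := hεf t
    simp only [hfdef, if_pos ht, dif_pos h2] at h
    exact le_trans h (min_le_right _ _)
  -- key membership lemma
  have key : ∀ e : ℝ, |e| ≤ ε →
      ((fun v t => q.1 v t + e * dx v t, q.2.1, q.2.2.1, q.2.2.2.1,
        fun t => q.2.2.2.2 t + e * ds t) : WPoint V T)
        ∈ Qset s0 Ls Us Lx Ux Ly Uy C := by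
    intro e he
    have he1 : e ≤ ε := le_trans (le_abs_self e) he
    have he2 : -ε ≤ e := by have := neg_abs_le e; linarith
    have hprev : ∀ t : Fin T,
        prevStock s0 (fun u => q.2.2.2.2 u + e * ds u) t
          = prevStock s0 (q.2.2.2.2) t
            + e * (if _ : (t : ℕ) = 0 then (0 : ℝ)
                else ds ⟨(t : ℕ) - 1, lt_of_le_of_lt (Nat.sub_le _ _) t.isLt⟩) := by
      intro t
      by_cases h0 : (t : ℕ) = 0 <;> simp [prevStock, h0]
    have hdsid : ∀ t : Fin T,
        ds t = (if _ : (t : ℕ) = 0 then (0 : ℝ)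
                else ds ⟨(t : ℕ) - 1, lt_of_le_of_lt (Nat.sub_le _ _) t.isLt⟩)
              + (if t = t₁ then 1 else 0) := by
      intro t
      have htt : (t = t₁) ↔ ((t : ℕ) = (t₁ : ℕ)) := Fin.ext_iff
      by_cases h0 : (t : ℕ) = 0
      · rw [dif_pos h0]
        by_cases h1 : t = t₁
        · rw [if_pos h1]
          simp [hdsdef, h1]
        · rw [if_neg h1]
          have hb : ¬ t₁ ≤ t := by
            rw [Fin.le_def]
            rw [htt] at h1
            omega
          simp [hdsdef, hb]
      · rw [dif_neg h0]
        by_cases h1 : t = t₁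
        · rw [if_pos h1]
          have ha : t₁ ≤ t := le_of_eq h1.symm
          have hb : ¬ t₁ ≤ (⟨(t : ℕ) - 1, lt_of_le_of_lt (Nat.sub_le _ _) t.isLt⟩ : Fin T) := by
            rw [Fin.le_def]
            simp only [Fin.val_mk]
            rw [htt] at h1
            omega
          simp [hdsdef, ha, hb]
        · rw [if_neg h1]
          rw [htt] at h1
          by_cases h2 : t₁ ≤ t
          · have hb : t₁ ≤ (⟨(t : ℕ) - 1, lt_of_le_of_lt (Nat.sub_le _ _) t.isLt⟩ : Fin T) := by
              rw [Fin.le_def] at h2 ⊢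
              simp only [Fin.val_mk]
              omega
            simp [hdsdef, h2, hb]
          · have hb : ¬ t₁ ≤ (⟨(t : ℕ) - 1, lt_of_le_of_lt (Nat.sub_le _ _) t.isLt⟩ : Fin T) := by
              rw [Fin.le_def] at h2 ⊢
              simp only [Fin.val_mk]
              omega
            simp [hdsdef, h2, hb]
    have hdxsum : ∀ t : Fin T, ∑ v, dx v t = if t = t₁ then 1 else 0 := by
      intro t
      by_cases ht : t = t₁
      · subst ht
        simp [hdxdef]
      · simp [hdxdef, ht]
    simp only [Qset, Set.mem_setOf_eq, WPoint.x, WPoint.y, WPoint.w, WPoint.z, WPoint.s]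
    refine ⟨?_, ?_, ?_, ?_, ?_, ?_, ?_, ?_⟩
    · -- balance
      intro t
      rw [hprev t, Finset.sum_add_distrib]
      have hsum : ∑ v, e * dx v t = e * (if t = t₁ then 1 else 0) := by
        rw [← Finset.mul_sum, hdxsum t]
      rw [hsum, hbal t]
      linear_combination e * (hdsid t)
    · -- stock bounds
      intro t
      by_cases ht : t₁ ≤ t
      · have h1 := hstrict t ht
        simp only [hdsdef, if_pos ht, mul_one]
        constructor <;> [linarith [hεLs t ht]; linarith [hεUs t ht]]
      · simp only [hdsdef, if_neg ht, mul_zero, add_zero]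
        exact hsb t
    · -- sales vs previous stock
      intro t
      rw [hprev t]
      by_cases h0 : (t : ℕ) = 0
      · simp only [dif_pos h0, mul_zero, add_zero]
        exact hsale t
      · simp only [dif_neg h0]
        by_cases ht' : t₁ ≤ (⟨(t : ℕ) - 1, lt_of_le_of_lt (Nat.sub_le _ _) t.isLt⟩ : Fin T)
        · have h2 : ((⟨(t : ℕ) - 1, lt_of_le_of_lt (Nat.sub_le _ _) t.isLt⟩ : Fin T) : ℕ) + 1 < T := by
            simp only []
            omega
          have hs := hεSale _ ht' h2
          have heq : (⟨((⟨(t : ℕ) - 1, lt_of_le_of_lt (Nat.sub_le _ _) t.isLt⟩ : Fin T) : ℕ) + 1, h2⟩ : Fin T) = t := by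
            apply Fin.ext
            simp only []
            omega
          rw [heq] at hs
          have hp : prevStock s0 (q.2.2.2.2) t
              = q.2.2.2.2 ⟨(t : ℕ) - 1, lt_of_le_of_lt (Nat.sub_le _ _) t.isLt⟩ := by
            simp [prevStock, h0]
          rw [hp]
          simp only [hdsdef, if_pos ht', mul_one]
          linarith
        · simp only [hdsdef, if_neg ht', mul_zero, add_zero]
          exact hsale t
    · -- complementarity
      intro c hc
      have hval : ∀ u : WVar V T,
          u.val (fun v t => q.1 v t + e * dx v t) (q.2.1)
            = u.val (q.1) (q.2.1)
              + e * (if u.isX = true ∧ u.v = v₁ ∧ u.t = t₁ then 1 else 0) := by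
        intro u
        rcases u with ⟨b, uv, ut⟩
        cases b <;> simp only [WVar.val, hdxdef, Bool.false_eq_true, if_false, if_true,
          false_and, true_and, if_neg, mul_zero, add_zero] <;> simp <;> split_ifs <;> ring
      have hxpos : 0 < q.1 v₁ t₁ := lt_of_le_of_lt (hLx v₁ t₁) hx1.1
      have hne : ∀ (u : WVar V T) (B : ℝ),
          u.isX = true → u.v = v₁ → u.t = t₁ →
          (B = 0 ∨ B = u.lb Lx Ly ∨ B = u.ub Ux Uy) →
          u.val (q.1) (q.2.1) - B ≠ 0 := by
        intro u B hb hv ht hB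
        have hval' : u.val (q.1) (q.2.1) = q.1 v₁ t₁ := by
          simp [WVar.val, hb, hv, ht]
        have hlb : u.lb Lx Ly = Lx v₁ t₁ := by simp [WVar.lb, hb, hv, ht]
        have hub : u.ub Ux Uy = Ux v₁ t₁ := by simp [WVar.ub, hb, hv, ht]
        rw [hval']
        rcases hB with h | h | h
        · rw [h]; exact sub_ne_zero.mpr (ne_of_gt hxpos)
        · rw [h, hlb]; exact sub_ne_zero.mpr (ne_of_gt hx1.1)
        · rw [h, hub]; exact sub_ne_zero.mpr (ne_of_lt hx1.2)
      obtain ⟨-, hB1, hB2⟩ := hC c hc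
      have h0 := hcompl c hc
      rw [hval c.V1, hval c.V2]
      by_cases p1 : c.V1.isX = true ∧ c.V1.v = v₁ ∧ c.V1.t = t₁ <;>
        by_cases p2 : c.V2.isX = true ∧ c.V2.v = v₁ ∧ c.V2.t = t₁
      · exact absurd h0 (mul_ne_zero (hne _ _ p1.1 p1.2.1 p1.2.2 hB1)
          (hne _ _ p2.1 p2.2.1 p2.2.2 hB2))
      · have hb2 : c.V2.val (q.1) (q.2.1) - c.B2 = 0 := by
          rcases mul_eq_zero.mp h0 with h | h
          · exact absurd h (hne _ _ p1.1 p1.2.1 p1.2.2 hB1)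
          · exact h
        rw [if_pos p1, if_neg p2]
        linear_combination (c.V1.val (q.1) (q.2.1) + e * 1 - c.B1) * hb2
      · have hb1 : c.V1.val (q.1) (q.2.1) - c.B1 = 0 := by
          rcases mul_eq_zero.mp h0 with h | h
          · exact h
          · exact absurd h (hne _ _ p2.1 p2.2.1 p2.2.2 hB2)
        rw [if_neg p1, if_pos p2]
        linear_combination (c.V2.val (q.1) (q.2.1) + e * 1 - c.B2) * hb1
      · rw [if_neg p1, if_neg p2]
        linear_combination h0
    · exact hyb
    · -- x bounds
      intro v t
      by_cases h : v = v₁ ∧ t = t₁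
      · obtain ⟨hv, ht⟩ := h
        subst hv; subst ht
        have hw1 : q.2.2.1 v t = 1 := by
          rcases hw01 v t with h0 | h1
          · exfalso
            have hub := (hxb v t).2
            rw [h0, mul_zero] at hub
            have := hLx v t
            linarith [hx1.1]
          · exact h1
        rw [hw1]
        simp only [hdxdef, if_pos (⟨rfl, rfl⟩ : v = v ∧ t = t), mul_one]
        constructor <;> linarith
      · simp only [hdxdef, if_neg h, mul_zero, add_zero]
        exact hxb v t
    · exact hw01
    · exact hz01
  -- now derive the contradiction
  intro hext
  obtain ⟨-, hext⟩ := hext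
  have hqp := key ε (le_of_eq (abs_of_pos hεpos))
  have hqm := key (-ε) (by rw [abs_neg, abs_of_pos hεpos])
  have hsub := subset_convexHull ℝ (Qset s0 Ls Us Lx Ux Ly Uy C)
  have hseg : q ∈ openSegment ℝ
      ((fun v t => q.1 v t + (-ε) * dx v t, q.2.1, q.2.2.1, q.2.2.2.1,
        fun t => q.2.2.2.2 t + (-ε) * ds t) : WPoint V T)
      ((fun v t => q.1 v t + ε * dx v t, q.2.1, q.2.2.1, q.2.2.2.1,
        fun t => q.2.2.2.2 t + ε * ds t) : WPoint V T) := by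
    refine ⟨1/2, 1/2, by norm_num, by norm_num, by norm_num, ?_⟩
    show ((fun v t => (1/2 : ℝ) * (q.1 v t + (-ε) * dx v t)
            + (1/2 : ℝ) * (q.1 v t + ε * dx v t),
          fun v t => (1/2 : ℝ) * q.2.1 v t + (1/2 : ℝ) * q.2.1 v t,
          fun v t => (1/2 : ℝ) * q.2.2.1 v t + (1/2 : ℝ) * q.2.2.1 v t,
          fun v t => (1/2 : ℝ) * q.2.2.2.1 v t + (1/2 : ℝ) * q.2.2.2.1 v t,
          fun t => (1/2 : ℝ) * (q.2.2.2.2 t + (-ε) * ds t)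
            + (1/2 : ℝ) * (q.2.2.2.2 t + ε * ds t)) : WPoint V T) = q
    have h1 : (fun v t => (1/2 : ℝ) * (q.1 v t + (-ε) * dx v t)
        + (1/2 : ℝ) * (q.1 v t + ε * dx v t)) = q.1 := by
      funext v t; ring
    have h2 : (fun v t => (1/2 : ℝ) * q.2.1 v t + (1/2 : ℝ) * q.2.1 v t)
        = q.2.1 := by funext v t; ring
    have h3 : (fun v t => (1/2 : ℝ) * q.2.2.1 v t + (1/2 : ℝ) * q.2.2.1 v t)
        = q.2.2.1 := by funext v t; ring
    have h4 : (fun v t => (1/2 : ℝ) * q.2.2.2.1 v t + (1/2 : ℝ) * q.2.2.2.1 v t)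
        = q.2.2.2.1 := by funext v t; ring
    have h5 : (fun t => (1/2 : ℝ) * (q.2.2.2.2 t + (-ε) * ds t)
        + (1/2 : ℝ) * (q.2.2.2.2 t + ε * ds t)) = q.2.2.2.2 := by
      funext t; ring
    rw [h1, h2, h3, h4, h5]
  have hres := hext (hsub hqm) (hsub hqp) hseg
  have hcontr := congrFun (congrFun (congrArg Prod.fst hres) v₁) t₁
  simp only [hdxdef, if_pos (⟨rfl, rfl⟩ : v₁ = v₁ ∧ t₁ = t₁), mul_one] at hcontr
  have : q.1 v₁ t₁ + -ε = q.1 v₁ t₁ := hcontr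
  linarith
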